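/- Let i, j be nonnegative integers. The only points of the hyperelliptic curve y² = x(x² + 2ⁱtʲ)(x² + 2^{i+1}tʲ) defined over the rational function field ℚ(t) are the point (0,0) and the point at infinity. Equivalently, if X, Y, Z ∈ ℚ[t] are coprime polynomials (with appropriate weights) satisfying Y² = XZ(X² + 2ⁱtʲZ²)(X² + 2^{i+1}tʲZ²), then Y = 0 and XZ(X²+2ⁱtʲZ²)(X²+2^{i+1}tʲZ²) = 0. -/

import Mathlib

open Polynomial

/-- odd square is 1 mod 8 -/
lemma odd_sq_mod8 {x : ℤ} (hx : Odd x) : ∃ k, x ^ 2 = 8 * k + 1 := by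
  obtain ⟨t, rfl⟩ := hx
  obtain ⟨u, hu⟩ := Int.even_mul_succ_self t
  exact ⟨u, by nlinarith [hu]⟩

lemma even_of_sq_even {w : ℤ} (h : Even (w ^ 2)) : Even w := by
  rcases Int.even_or_odd w with h' | h'
  · exact h'
  · exact absurd h (Int.not_even_iff_odd.mpr h'.pow)

/-- no nonzero solution to w² = 2y² -/
lemma sqrt2_lemma : ∀ (n : ℕ) (y w : ℤ), y.natAbs ≤ n → w ^ 2 = 2 * y ^ 2 → y = 0 := by
  intro n
  induction n using Nat.strong_induction_on with
  | _ n IH =>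
    intro y w hyn h
    by_cases hy : y = 0
    · exact hy
    obtain ⟨w1, rfl⟩ : Even w := even_of_sq_even ⟨y ^ 2, by linarith⟩
    have h2 : y ^ 2 = 2 * w1 ^ 2 := by nlinarith
    obtain ⟨y1, rfl⟩ : Even y := even_of_sq_even ⟨w1 ^ 2, by linarith⟩
    have h3 : w1 ^ 2 = 2 * y1 ^ 2 := by nlinarith
    have hy1 : y1 ≠ 0 := by rintro rfl; simp at hy
    have hlt : y1.natAbs < n := by
      have : (y1 + y1).natAbs = 2 * y1.natAbs := by
        rw [← two_mul, Int.natAbs_mul]; rfl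
      omega
    have := IH y1.natAbs hlt y1 w1 le_rfl h3
    omega

lemma sqrt2_lemma' {y w : ℤ} (h : w ^ 2 = 2 * y ^ 2) : y = 0 :=
  sqrt2_lemma y.natAbs y w le_rfl h

lemma odd_isCoprime_two {t : ℤ} (ht : Odd t) : IsCoprime t (2 : ℤ) := by
  obtain ⟨k, rfl⟩ := ht
  exact ⟨1, -k, by ring⟩

lemma odd_of_sq_odd {t : ℤ} (h : Odd (t ^ 2)) : Odd t := by
  rcases Int.even_or_odd t with h' | h'
  · exact absurd h (Int.not_odd_iff_even.mpr (by obtain ⟨r, rfl⟩ := h'; exact ⟨2*r^2, by ring⟩))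
  · exact h'

/-- positive part of Int.sq_of_coprime -/
lemma pos_sq_of_coprime {a m ρ : ℤ} (h : IsCoprime a m) (heq : a * m = ρ ^ 2)
    (ha : 0 < a) : ∃ x : ℤ, a = x ^ 2 := by
  obtain ⟨x, hx | hx⟩ := Int.sq_of_isCoprime h heq
  · exact ⟨x, hx⟩
  · exfalso; nlinarith [sq_nonneg x]

/-- descent inner step : from A² = t⁴ + 4 s⁴ produce a smaller quartic instance -/
lemma descent_step {s t A : ℤ} (hs : s ≠ 0) (ht : Odd t) (hcop : IsCoprime t s)
    (hA : 0 < A) (h : A ^ 2 = t ^ 4 + 4 * s ^ 4) :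
    ∃ g h' c : ℤ, g.natAbs < A.natAbs ∧ g ^ 4 = h' ^ 4 + c ^ 2 ∧ h' ≠ 0 ∧ c ≠ 0 := by
  have PT : PythagoreanTriple (t ^ 2) (2 * s ^ 2) A := by
    unfold PythagoreanTriple; linear_combination -h
  have hgcd : Int.gcd (t ^ 2) (2 * s ^ 2) = 1 := by
    rw [← Int.isCoprime_iff_gcd_eq_one]
    exact IsCoprime.pow_left ((odd_isCoprime_two ht).mul_right hcop.pow_right)
  have hpar : t ^ 2 % 2 = 1 := Int.odd_iff.mp ht.pow
  obtain ⟨k, l, h1, h2, h3, h4, _h5, h6⟩ :=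
    PythagoreanTriple.coprime_classification' PT hgcd hpar hA
  have hkl : k * l = s ^ 2 := by linarith
  have hk0 : k ≠ 0 := by
    intro hk; rw [hk, zero_mul] at hkl
    exact hs (pow_eq_zero_iff two_ne_zero |>.mp hkl.symm)
  have hkpos : 0 < k := lt_of_le_of_ne h6 (Ne.symm hk0)
  have hl0 : l ≠ 0 := by
    intro hl; rw [hl, mul_zero] at hkl
    exact hs (pow_eq_zero_iff two_ne_zero |>.mp hkl.symm)
  have hlpos : 0 < l := by
    rcases lt_trichotomy l 0 with hl | hl | hl
    · exfalso
      nlinarith [mul_pos hkpos (by linarith : (0:ℤ) < -l), sq_nonneg s]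
    · exact absurd hl hl0
    · exact hl
  have hckl : IsCoprime k l := Int.isCoprime_iff_gcd_eq_one.mpr h4
  obtain ⟨g, hg⟩ := pos_sq_of_coprime hckl hkl hkpos
  obtain ⟨w, hw⟩ := pos_sq_of_coprime hckl.symm (by linarith [hkl] : l * k = s ^ 2) hlpos
  subst hg; subst hw
  refine ⟨g, w, t, ?_, by linear_combination -h1, ?_, ?_⟩
  · -- g.natAbs < A.natAbs
    have h1k : (1 : ℤ) ≤ g ^ 2 := hkpos
    have h1l : (1 : ℤ) ≤ w ^ 2 := hlpos
    have hkA : g ^ 2 < A := by nlinarith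
    have hgabs : (g.natAbs : ℤ) ^ 2 = g ^ 2 := Int.natAbs_sq g
    have hg0 : (0:ℤ) ≤ (g.natAbs : ℤ) := by positivity
    have hgA : (g.natAbs : ℤ) < A := by nlinarith [sq_nonneg ((g.natAbs : ℤ) - 1)]
    have hAA : (A.natAbs : ℤ) = A := Int.natAbs_of_nonneg (le_of_lt hA)
    omega
  · intro h0; rw [h0] at hlpos; simp at hlpos
  · intro h0; rw [h0] at ht; have := Int.odd_iff.mp ht; omega

/-- Fermat's quartic descent : a⁴ = b⁴ + c² implies b = 0 or c = 0 -/
lemma quartic_aux : ∀ (n : ℕ) (a b c : ℤ), a.natAbs ≤ n → a ^ 4 = b ^ 4 + c ^ 2 →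
    b = 0 ∨ c = 0 := by
  intro n
  induction n using Nat.strong_induction_on with
  | _ n IH =>
    intro a b c han h
    by_cases hb : b = 0
    · exact Or.inl hb
    by_cases hc : c = 0
    · exact Or.inr hc
    exfalso
    have ha : a ≠ 0 := by
      rintro rfl
      have hb4 : b ^ 4 = 0 := by nlinarith [sq_nonneg (b ^ 2), sq_nonneg c]
      exact hb (pow_eq_zero_iff (by norm_num : (4:ℕ) ≠ 0) |>.mp hb4)
    -- pass to absolute values
    obtain ⟨A, B, C, hA0, hB0, hC0, h', hAn⟩ :
        ∃ A B C : ℤ, 0 < A ∧ 0 < B ∧ 0 < C ∧ A ^ 4 = B ^ 4 + C ^ 2 ∧ A.natAbs ≤ n := by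
      refine ⟨(a.natAbs : ℤ), (b.natAbs : ℤ), (c.natAbs : ℤ), ?_, ?_, ?_, ?_, ?_⟩
      · exact_mod_cast Nat.pos_of_ne_zero (Int.natAbs_ne_zero.mpr ha)
      · exact_mod_cast Nat.pos_of_ne_zero (Int.natAbs_ne_zero.mpr hb)
      · exact_mod_cast Nat.pos_of_ne_zero (Int.natAbs_ne_zero.mpr hc)
      · have e1 : ((a.natAbs : ℤ)) ^ 4 = a ^ 4 := by
          rw [show (4:ℕ) = 2*2 from rfl, pow_mul, pow_mul, Int.natAbs_sq]
        have e2 : ((b.natAbs : ℤ)) ^ 4 = b ^ 4 := by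
          rw [show (4:ℕ) = 2*2 from rfl, pow_mul, pow_mul, Int.natAbs_sq]
        have e3 : ((c.natAbs : ℤ)) ^ 2 = c ^ 2 := Int.natAbs_sq c
        rw [e1, e2, e3]; exact h
      · rwa [Int.natAbs_natCast]
    clear h hb hc ha han
    -- gcd reduction
    by_cases hg1 : Int.gcd A B = 1
    case neg =>
      set g := Int.gcd A B with hgdef
      have hg0 : g ≠ 0 := by
        simp only [hgdef, Ne, Int.gcd_eq_zero_iff]
        rintro ⟨h1, -⟩; rw [h1] at hA0; simp at hA0
      have hg2 : 2 ≤ g := by omega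
      obtain ⟨A', hA'⟩ : ((g : ℤ)) ∣ A := Int.gcd_dvd_left _ _
      obtain ⟨B', hB'⟩ : ((g : ℤ)) ∣ B := Int.gcd_dvd_right _ _
      have hgz : (0:ℤ) < (g:ℤ) := by exact_mod_cast Nat.pos_of_ne_zero hg0
      have hdvd : ((g:ℤ) ^ 2) ^ 2 ∣ C ^ 2 :=
        ⟨A' ^ 4 - B' ^ 4, by rw [hA', hB'] at h'; linear_combination -h'⟩
      have hdvd2 : (g:ℤ) ^ 2 ∣ C := (Int.pow_dvd_pow_iff two_ne_zero).mp hdvd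
      obtain ⟨C', hC'⟩ := hdvd2
      have heq' : A' ^ 4 = B' ^ 4 + C' ^ 2 := by
        have hg4 : (0:ℤ) < (g:ℤ) ^ 4 := by positivity
        have hh : (g:ℤ)^4 * A'^4 = (g:ℤ)^4 * (B'^4 + C'^2) := by
          rw [hA', hB', hC'] at h'; linear_combination h'
        exact mul_left_cancel₀ (ne_of_gt hg4) hh
      have hA'0 : A' ≠ 0 := by rintro rfl; rw [hA', mul_zero] at hA0; simp at hA0
      have hlt : A'.natAbs < A.natAbs := by
        have hmul : A.natAbs = g * A'.natAbs := by
          rw [hA', Int.natAbs_mul, Int.natAbs_natCast]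
        have hA'n : 1 ≤ A'.natAbs := Nat.pos_of_ne_zero (Int.natAbs_ne_zero.mpr hA'0)
        have hstep : A'.natAbs < 2 * A'.natAbs := by omega
        have hstep2 : 2 * A'.natAbs ≤ g * A'.natAbs := Nat.mul_le_mul_right _ hg2
        exact lt_of_lt_of_le hstep (hstep2.trans_eq hmul.symm)
      rcases IH A'.natAbs (lt_of_lt_of_le hlt hAn) A' B' C' le_rfl heq' with h0 | h0
      · rw [h0, mul_zero] at hB'; rw [hB'] at hB0; simp at hB0
      · rw [h0, mul_zero] at hC'; rw [hC'] at hC0; simp at hC0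
    case pos =>
    have hcop : IsCoprime A B := Int.isCoprime_iff_gcd_eq_one.mpr hg1
    -- A is odd
    have hAodd : Odd A := by
      rcases Int.even_or_odd A with hAe | hAo
      · exfalso
        have hBodd : Odd B := by
          rcases Int.even_or_odd B with hBe | hBo
          · exfalso
            have := IsCoprime.isUnit_of_dvd' hcop hAe.two_dvd hBe.two_dvd
            rw [Int.isUnit_iff] at this; omega
          · exact hBo
        obtain ⟨α, hα⟩ := hAe
        obtain ⟨k, hk⟩ := odd_sq_mod8 (hBodd.pow (n := 2))
        have hB4' : B ^ 4 = 8 * k + 1 := by rw [← hk]; ring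
        rcases Int.even_or_odd C with hCe | hCo
        · obtain ⟨γ, hγ⟩ := hCe
          have he : 16 * α ^ 4 = 8 * k + 1 + 4 * γ ^ 2 := by
            rw [← hB4']; rw [hα, hγ] at h'; linear_combination h'
          have h4 : (4:ℤ) ∣ 16 * α ^ 4 := ⟨4 * α ^ 4, by ring⟩
          have h4' : (4:ℤ) ∣ 4 * γ ^ 2 := ⟨γ ^ 2, by ring⟩
          omega
        · obtain ⟨k2, hk2⟩ := odd_sq_mod8 hCo
          have he : 16 * α ^ 4 = 8 * k + 1 + (8 * k2 + 1) := by
            rw [← hB4', ← hk2]; rw [hα] at h'; linear_combination h'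
          have h8 : (8:ℤ) ∣ 16 * α ^ 4 := ⟨2 * α ^ 4, by ring⟩
          omega
      · exact hAo
    have hcopB4C2 : IsCoprime (B ^ 4) (C ^ 2) := by
      obtain ⟨u, v, huv⟩ := (hcop.pow (m := 4) (n := 4))
      exact ⟨u + v, u, by linear_combination -u * h' + huv⟩
    rcases Int.even_or_odd B with hBe | hBo
    · -- B even, C odd
      have hCodd : Odd C := by
        rcases Int.even_or_odd C with hCe | hCo
        · exfalso
          obtain ⟨k, hk⟩ := odd_sq_mod8 (hAodd.pow (n := 2))
          have hA4' : A ^ 4 = 8 * k + 1 := by rw [← hk]; ring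
          obtain ⟨β, hβ⟩ := hBe
          obtain ⟨γ, hγ⟩ := hCe
          have he : 8 * k + 1 = 16 * β ^ 4 + 4 * γ ^ 2 := by
            rw [← hA4']; rw [hβ, hγ] at h'; linear_combination h'
          have h4 : (4:ℤ) ∣ 16 * β ^ 4 := ⟨4 * β ^ 4, by ring⟩
          have h4' : (4:ℤ) ∣ 4 * γ ^ 2 := ⟨γ ^ 2, by ring⟩
          omega
        · exact hCo
      have PT : PythagoreanTriple C (B ^ 2) (A ^ 2) := by
        unfold PythagoreanTriple; linear_combination -h'
      have hcop2 : IsCoprime C (B ^ 2) :=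
        ((hcopB4C2.of_isCoprime_of_dvd_right (dvd_pow_self C two_ne_zero)).of_isCoprime_of_dvd_left
          (pow_dvd_pow B (by norm_num))).symm
      have hpar : C % 2 = 1 := Int.odd_iff.mp hCodd
      have hA2pos : (0:ℤ) < A ^ 2 := by positivity
      obtain ⟨m, n', h1, h2, h3, h4, h5, h6⟩ :=
        PythagoreanTriple.coprime_classification' PT
          (Int.isCoprime_iff_gcd_eq_one.mp hcop2) hpar hA2pos
      -- h1 : C = m²-n'², h2 : B² = 2mn', h3 : A² = m²+n'²
      have hm0 : m ≠ 0 := by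
        rintro rfl
        have : B ^ 2 = 0 := by linear_combination h2
        exact hB0.ne' (pow_eq_zero_iff two_ne_zero |>.mp this)
      have hmpos : 0 < m := lt_of_le_of_ne h6 (Ne.symm hm0)
      have hn'0 : n' ≠ 0 := by
        rintro rfl
        have : B ^ 2 = 0 := by linear_combination h2
        exact hB0.ne' (pow_eq_zero_iff two_ne_zero |>.mp this)
      have hn'pos : 0 < n' := by
        rcases lt_trichotomy n' 0 with hl | hl | hl
        · exfalso
          nlinarith [mul_pos hmpos (by linarith : (0:ℤ) < -n'), sq_nonneg B]
        · exact absurd hl hn'0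
        · exact hl
      obtain ⟨B1, hB1⟩ := hBe
      have hmn : m * n' = 2 * B1 ^ 2 := by
        rw [hB1] at h2
        have h22 : 2 * (m * n') = 2 * (2 * B1 ^ 2) := by linear_combination -h2
        exact mul_left_cancel₀ two_ne_zero h22
      have hcopmn : IsCoprime m n' := Int.isCoprime_iff_gcd_eq_one.mpr h4
      -- split on which of m, n' is even
      have main : ∃ s t : ℤ, s ≠ 0 ∧ Odd t ∧ IsCoprime t s ∧ A ^ 2 = t ^ 4 + 4 * s ^ 4 := by
        rcases h5 with ⟨hme, hno⟩ | ⟨hmo, hne⟩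
        · -- m even, n' odd
          obtain ⟨m1, hm1⟩ : (2:ℤ) ∣ m := Int.dvd_of_emod_eq_zero hme
          have hm1n : m1 * n' = B1 ^ 2 := by
            rw [hm1] at hmn
            have h22 : 2 * (m1 * n') = 2 * B1 ^ 2 := by linear_combination hmn
            linarith
          have hcop1 : IsCoprime m1 n' :=
            hcopmn.of_isCoprime_of_dvd_left ⟨2, by rw [hm1]; ring⟩
          have hm1pos : 0 < m1 := by rw [hm1] at hmpos; linarith
          obtain ⟨s, hs⟩ := pos_sq_of_coprime hcop1 hm1n hm1pos
          obtain ⟨t, ht⟩ := pos_sq_of_coprime hcop1.symm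
            (by rw [mul_comm]; exact hm1n) hn'pos
          have htodd : Odd t := odd_of_sq_odd (ht ▸ Int.odd_iff.mpr hno)
          have hs0 : s ≠ 0 := by
            rintro rfl; rw [hs] at hm1pos; simp at hm1pos
          have hcopts : IsCoprime t s := by
            have h := hcop1.symm
            rw [hs, ht] at h
            exact ((h.of_isCoprime_of_dvd_left (dvd_pow_self t two_ne_zero)).of_isCoprime_of_dvd_right
              (dvd_pow_self s two_ne_zero))
          refine ⟨s, t, hs0, htodd, hcopts, ?_⟩
          rw [hm1, hs] at h3
          rw [ht] at h3
          linear_combination h3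
        · -- n' even, m odd
          obtain ⟨n1, hn1⟩ : (2:ℤ) ∣ n' := Int.dvd_of_emod_eq_zero hne
          have hm1n : m * n1 = B1 ^ 2 := by
            rw [hn1] at hmn
            have h22 : 2 * (m * n1) = 2 * B1 ^ 2 := by linear_combination hmn
            linarith
          have hcop1 : IsCoprime m n1 :=
            hcopmn.of_isCoprime_of_dvd_right ⟨2, by rw [hn1]; ring⟩
          have hn1pos : 0 < n1 := by rw [hn1] at hn'pos; linarith
          obtain ⟨t, ht⟩ := pos_sq_of_coprime hcop1 hm1n hmpos
          obtain ⟨s, hs⟩ := pos_sq_of_coprime hcop1.symm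
            (by rw [mul_comm]; exact hm1n) hn1pos
          have htodd : Odd t := odd_of_sq_odd (ht ▸ Int.odd_iff.mpr hmo)
          have hs0 : s ≠ 0 := by
            rintro rfl; rw [hs] at hn1pos; simp at hn1pos
          have hcopts : IsCoprime t s := by
            have h := hcop1
            rw [hs, ht] at h
            exact (h.of_isCoprime_of_dvd_left (dvd_pow_self t two_ne_zero)).of_isCoprime_of_dvd_right
              (dvd_pow_self s two_ne_zero)
          refine ⟨s, t, hs0, htodd, hcopts, ?_⟩
          rw [hn1, hs, ht] at h3
          linear_combination h3
      obtain ⟨s, t, hs0, htodd, hcopts, hA2⟩ := main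
      have hApos2 : 0 < A := hA0
      obtain ⟨g, h'', c, hlt, heqq, hne1, hne2⟩ :=
        descent_step hs0 htodd hcopts hApos2 hA2
      rcases IH g.natAbs (lt_of_lt_of_le hlt hAn) g h'' c le_rfl heqq with h0 | h0
      · exact hne1 h0
      · exact hne2 h0
    · -- B odd, C even
      have PT : PythagoreanTriple (B ^ 2) C (A ^ 2) := by
        unfold PythagoreanTriple; linear_combination -h'
      have hcop2 : IsCoprime (B ^ 2) C :=
        (hcopB4C2.of_isCoprime_of_dvd_right (dvd_pow_self C two_ne_zero)).of_isCoprime_of_dvd_left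
          (pow_dvd_pow B (by norm_num))
      have hpar : B ^ 2 % 2 = 1 := Int.odd_iff.mp hBo.pow
      have hA2pos : (0:ℤ) < A ^ 2 := by positivity
      obtain ⟨m, n', h1, h2, h3, h4, h5, h6⟩ :=
        PythagoreanTriple.coprime_classification' PT
          (Int.isCoprime_iff_gcd_eq_one.mp hcop2) hpar hA2pos
      -- h1 : B² = m²-n'², h2 : C = 2mn', h3 : A² = m²+n'²
      have hn'0 : n' ≠ 0 := by
        rintro rfl
        rw [mul_zero] at h2
        exact hC0.ne' h2
      have hquart : m ^ 4 = n' ^ 4 + (A * B) ^ 2 := by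
        linear_combination (-(m^2 + n'^2)) * h1 - B^2 * h3
      have hmlt : m.natAbs < A.natAbs := by
        have h1' : m ^ 2 < A ^ 2 := by nlinarith [sq_nonneg n', sq_nonneg B]
        have e1 : (m.natAbs : ℤ) ^ 2 = m ^ 2 := Int.natAbs_sq m
        have e2 : (A.natAbs : ℤ) ^ 2 = A ^ 2 := Int.natAbs_sq A
        have c1 : (0:ℤ) ≤ (m.natAbs : ℤ) := by positivity
        have c2 : (0:ℤ) ≤ (A.natAbs : ℤ) := by positivity
        have : (m.natAbs : ℤ) < (A.natAbs : ℤ) := by nlinarith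
        exact_mod_cast this
      rcases IH m.natAbs (lt_of_lt_of_le hmlt hAn) m n' (A * B) le_rfl hquart with h0 | h0
      · exact hn'0 h0
      · rcases mul_eq_zero.mp h0 with h0 | h0
        · exact hA0.ne' h0
        · exact hB0.ne' h0

lemma quartic {a b c : ℤ} (h : a ^ 4 = b ^ 4 + c ^ 2) : b = 0 ∨ c = 0 :=
  quartic_aux a.natAbs a b c le_rfl h

/-- Fermat/concordant forms: x²+y² and x²+2y² both squares forces y = 0 -/
lemma CC1 {x y z w : ℤ} (h1 : z ^ 2 = x ^ 2 + y ^ 2) (h2 : w ^ 2 = x ^ 2 + 2 * y ^ 2) :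
    y = 0 := by
  have hq : w ^ 4 = x ^ 4 + (2 * y * z) ^ 2 := by
    linear_combination (w^2 + x^2 + 2*y^2) * h2 - 4 * y^2 * h1
  rcases quartic hq with h0 | h0
  · subst h0
    have hz : z ^ 2 = y ^ 2 := by linarith
    have hw : w ^ 2 = 2 * y ^ 2 := by linarith
    exact sqrt2_lemma' hw
  · rcases mul_eq_zero.mp h0 with h0 | h0
    · rcases mul_eq_zero.mp h0 with h0 | h0
      · norm_num at h0
      · exact h0
    · subst h0
      nlinarith [sq_nonneg x, sq_nonneg y]

/-- concordant forms: x²+2y² and x²+4y² both squares forces y = 0 -/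
lemma CC2_aux : ∀ (n : ℕ) (x y z w : ℤ), y.natAbs ≤ n →
    z ^ 2 = x ^ 2 + 2 * y ^ 2 → w ^ 2 = x ^ 2 + 4 * y ^ 2 → y = 0 := by
  intro n
  induction n using Nat.strong_induction_on with
  | _ n IH =>
    intro x y z w hyn h1 h2
    by_cases hy : y = 0
    · exact hy
    exfalso
    have hx : x ≠ 0 := by
      rintro rfl
      apply hy
      apply sqrt2_lemma' (y := y) (w := z)
      linarith
    -- gcd reduction
    by_cases hg1 : Int.gcd x y = 1
    case neg =>
      set g := Int.gcd x y with hgdef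
      have hg0 : g ≠ 0 := by
        simp only [hgdef, Ne, Int.gcd_eq_zero_iff]
        rintro ⟨hh, -⟩; exact hx hh
      have hg2 : 2 ≤ g := by omega
      obtain ⟨x', hx'⟩ : ((g : ℤ)) ∣ x := Int.gcd_dvd_left _ _
      obtain ⟨y', hy'⟩ : ((g : ℤ)) ∣ y := Int.gcd_dvd_right _ _
      have hgz : (0:ℤ) < (g:ℤ) := by exact_mod_cast Nat.pos_of_ne_zero hg0
      have hzdvd : (g:ℤ) ∣ z := by
        have : ((g:ℤ))^2 ∣ z^2 := ⟨x'^2 + 2*y'^2, by rw [hx', hy'] at h1; linear_combination h1⟩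
        exact (Int.pow_dvd_pow_iff two_ne_zero).mp this
      have hwdvd : (g:ℤ) ∣ w := by
        have : ((g:ℤ))^2 ∣ w^2 := ⟨x'^2 + 4*y'^2, by rw [hx', hy'] at h2; linear_combination h2⟩
        exact (Int.pow_dvd_pow_iff two_ne_zero).mp this
      obtain ⟨z', hz'⟩ := hzdvd
      obtain ⟨w', hw'⟩ := hwdvd
      have e1 : z' ^ 2 = x' ^ 2 + 2 * y' ^ 2 := by
        have : (g:ℤ)^2 * z'^2 = (g:ℤ)^2 * (x'^2 + 2*y'^2) := by
          rw [hx', hy', hz'] at h1; linear_combination h1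
        exact mul_left_cancel₀ (by positivity) this
      have e2 : w' ^ 2 = x' ^ 2 + 4 * y' ^ 2 := by
        have : (g:ℤ)^2 * w'^2 = (g:ℤ)^2 * (x'^2 + 4*y'^2) := by
          rw [hx', hy', hw'] at h2; linear_combination h2
        exact mul_left_cancel₀ (by positivity) this
      have hy'0 : y' ≠ 0 := by rintro rfl; rw [hy', mul_zero] at hy; exact hy rfl
      have hlt : y'.natAbs < y.natAbs := by
        have hmul : y.natAbs = g * y'.natAbs := by
          rw [hy', Int.natAbs_mul, Int.natAbs_natCast]
        have h1' : 1 ≤ y'.natAbs := Nat.pos_of_ne_zero (Int.natAbs_ne_zero.mpr hy'0)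
        have hstep : y'.natAbs < 2 * y'.natAbs := by omega
        have hstep2 : 2 * y'.natAbs ≤ g * y'.natAbs := Nat.mul_le_mul_right _ hg2
        exact lt_of_lt_of_le hstep (hstep2.trans_eq hmul.symm)
      exact hy'0 (IH y'.natAbs (lt_of_lt_of_le hlt hyn) x' y' z' w' le_rfl e1 e2)
    case pos =>
    have hcop : IsCoprime x y := Int.isCoprime_iff_gcd_eq_one.mpr hg1
    -- x odd
    have hxodd : Odd x := by
      rcases Int.even_or_odd x with hxe | hxo
      · exfalso
        have hyodd : Odd y := by
          rcases Int.even_or_odd y with hye | hyo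
          · have := IsCoprime.isUnit_of_dvd' hcop hxe.two_dvd hye.two_dvd
            rw [Int.isUnit_iff] at this; omega
          · exact hyo
        obtain ⟨x0, hx0⟩ := hxe
        have hzev : Even z := by
          apply even_of_sq_even
          exact ⟨x0 ^ 2 + y ^ 2 + x0 * x0, by rw [hx0] at h1; linear_combination h1⟩
        obtain ⟨z0, hz0⟩ := hzev
        have : 2 * y ^ 2 = 4 * z0 ^ 2 - 4 * x0 ^ 2 := by
          rw [hx0, hz0] at h1; linear_combination -h1
        have hyev : Even (y ^ 2) := ⟨z0^2 - x0^2, by linarith⟩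
        have := even_of_sq_even hyev
        rw [Int.even_iff] at this
        rw [Int.odd_iff] at hyodd
        omega
      · exact hxo
    have hwodd : Odd w := by
      apply odd_of_sq_odd
      rw [h2]
      rcases hxodd with ⟨k, hk⟩
      exact ⟨2*k^2 + 2*k + 2*y^2, by rw [hk]; ring⟩
    -- pass to |x|, |w|
    obtain ⟨X, W, hX0, hW0, hXodd, hWodd, hcopX, hh1, hh2⟩ :
        ∃ X W : ℤ, 0 < X ∧ 0 < W ∧ Odd X ∧ Odd W ∧ IsCoprime X y ∧
          z ^ 2 = X ^ 2 + 2 * y ^ 2 ∧ W ^ 2 = X ^ 2 + 4 * y ^ 2 := by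
      refine ⟨(x.natAbs : ℤ), (w.natAbs : ℤ), ?_, ?_, ?_, ?_, ?_, ?_, ?_⟩
      · exact_mod_cast Nat.pos_of_ne_zero (Int.natAbs_ne_zero.mpr hx)
      · have hw0 : w ≠ 0 := by
          rintro rfl
          rw [Int.odd_iff] at hwodd; omega
        exact_mod_cast Nat.pos_of_ne_zero (Int.natAbs_ne_zero.mpr hw0)
      · rcases Int.natAbs_eq x with he | he
        · rwa [← he]
        · rw [he] at hxodd; exact odd_neg.mp hxodd
      · rcases Int.natAbs_eq w with he | he
        · rwa [← he]
        · rw [he] at hwodd; exact odd_neg.mp hwodd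
      · rcases Int.natAbs_eq x with he | he
        · rwa [← he]
        · rw [he] at hcop; exact (IsCoprime.neg_left_iff _ _).mp hcop
      · rw [← Int.natAbs_sq x] at h1; exact h1
      · rw [← Int.natAbs_sq x, ← Int.natAbs_sq w] at h2; exact h2
    -- W > X
    have hy2 : (0:ℤ) < y ^ 2 :=
      lt_of_le_of_ne (sq_nonneg y) fun h => hy (pow_eq_zero_iff two_ne_zero |>.mp h.symm)
    have hWX : X < W := by nlinarith [hy2]
    obtain ⟨α, hα⟩ : Even (W + X) := by
      rcases hXodd with ⟨k1, e1⟩; rcases hWodd with ⟨k2, e2⟩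
      exact ⟨k2 + k1 + 1, by rw [e1, e2]; ring⟩
    obtain ⟨β, hβ⟩ : Even (W - X) := by
      rcases hXodd with ⟨k1, e1⟩; rcases hWodd with ⟨k2, e2⟩
      exact ⟨k2 - k1, by rw [e1, e2]; ring⟩
    have hαpos : 0 < α := by linarith
    have hβpos : 0 < β := by linarith
    have hWαβ : W = α + β := by linarith
    have hXαβ : X = α - β := by linarith
    have hαβ : α * β = y ^ 2 := by
      have h4 : 4 * (α * β) = 4 * y ^ 2 := by
        linear_combination hh2 - (W + α + β) * hWαβ + (X + α - β) * hXαβ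
      linarith
    have hcopαβ : IsCoprime α β := by
      have hcX2 : IsCoprime X (2:ℤ) := odd_isCoprime_two hXodd
      have h1' : IsCoprime X (2 ^ 2 * y ^ 2) := (hcX2.pow_right).mul_right hcopX.pow_right
      have h2' : IsCoprime X (2 ^ 2 * y ^ 2 + X * X) := IsCoprime.add_mul_left_right_iff.mpr h1'
      have hWX2 : W ^ 2 = 2 ^ 2 * y ^ 2 + X * X := by linear_combination hh2
      rw [← hWX2] at h2'
      have hcXW : IsCoprime X W :=
        h2'.of_isCoprime_of_dvd_right (dvd_pow_self W two_ne_zero)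
      obtain ⟨u, v, huv⟩ := hcXW
      rw [hWαβ, hXαβ] at huv
      exact ⟨v + u, v - u, by linear_combination huv⟩
    obtain ⟨s, hs⟩ := pos_sq_of_coprime hcopαβ hαβ hαpos
    obtain ⟨t, ht⟩ := pos_sq_of_coprime hcopαβ.symm (by rw [mul_comm]; exact hαβ) hβpos
    have hs0 : s ≠ 0 := by rintro rfl; rw [hs] at hαpos; simp at hαpos
    have ht0 : t ≠ 0 := by rintro rfl; rw [ht] at hβpos; simp at hβpos
    have hfin : s ^ 4 + t ^ 4 = z ^ 2 := by
      have e2 : 2 * (s ^ 4 + t ^ 4) = 2 * z ^ 2 := by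
        linear_combination (-(2*α + 2*s^2)) * hs + (-(2*β + 2*t^2)) * ht +
          (-(W + α + β)) * hWαβ + (-(X + α - β)) * hXαβ + hh2 - 2 * hh1
      linarith
    exact not_fermat_42 hs0 ht0 hfin

lemma CC2 {x y z w : ℤ} (h1 : z ^ 2 = x ^ 2 + 2 * y ^ 2) (h2 : w ^ 2 = x ^ 2 + 4 * y ^ 2) :
    y = 0 :=
  CC2_aux y.natAbs x y z w le_rfl h1 h2

/-- key lemma: v² = a⁴ + 2^d b⁴ and w² = a⁴ + 2^(d+1) b⁴ force b = 0 -/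
lemma keyodd {a b v w : ℤ} (d : ℕ) (h1 : v ^ 2 = a ^ 4 + 2 ^ d * b ^ 4)
    (h2 : w ^ 2 = a ^ 4 + 2 ^ (d + 1) * b ^ 4) : b = 0 := by
  rcases Nat.even_or_odd d with ⟨c, hc⟩ | ⟨c, hc⟩
  · -- d = 2c
    have e1 : v ^ 2 = (a ^ 2) ^ 2 + (2 ^ c * b ^ 2) ^ 2 := by
      rw [h1, hc]; ring
    have e2 : w ^ 2 = (a ^ 2) ^ 2 + 2 * (2 ^ c * b ^ 2) ^ 2 := by
      rw [h2, hc, pow_succ]; ring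
    have := CC1 e1 e2
    rcases mul_eq_zero.mp this with h0 | h0
    · exact absurd h0 (by positivity)
    · exact pow_eq_zero_iff two_ne_zero |>.mp h0
  · -- d = 2c+1
    have e1 : v ^ 2 = (a ^ 2) ^ 2 + 2 * (2 ^ c * b ^ 2) ^ 2 := by
      rw [h1, hc]; ring
    have e2 : w ^ 2 = (a ^ 2) ^ 2 + 4 * (2 ^ c * b ^ 2) ^ 2 := by
      rw [h2, hc]; ring
    have := CC2 e1 e2
    rcases mul_eq_zero.mp this with h0 | h0
    · exact absurd h0 (by positivity)
    · exact pow_eq_zero_iff two_ne_zero |>.mp h0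

/-- key lemma: a,b odd coprime with a⁴+b⁴ = 2v² and w² = a⁴+2b⁴ is impossible -/
lemma key2 {a b v w : ℤ} (ha : Odd a) (hb : Odd b) (hcop : IsCoprime a b)
    (h1 : a ^ 4 + b ^ 4 = 2 * v ^ 2) (h2 : w ^ 2 = a ^ 4 + 2 * b ^ 4) : False := by
  obtain ⟨α, hα⟩ : Even (a ^ 2 + b ^ 2) := by
    rcases ha with ⟨k1, e1⟩; rcases hb with ⟨k2, e2⟩
    exact ⟨2*k1^2+2*k1+2*k2^2+2*k2+1, by rw [e1, e2]; ring⟩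
  obtain ⟨β, hβ⟩ : Even (a ^ 2 - b ^ 2) := by
    rcases ha with ⟨k1, e1⟩; rcases hb with ⟨k2, e2⟩
    exact ⟨2*k1^2+2*k1-2*k2^2-2*k2, by rw [e1, e2]; ring⟩
  have hα2 : a ^ 2 + b ^ 2 = 2 * α := by linarith
  have hβ2 : a ^ 2 - b ^ 2 = 2 * β := by linarith
  -- α² = β² + (ab)²·? and α²+β² = v²
  have hquart : α ^ 4 = β ^ 4 + (a * b * v) ^ 2 := by
    have e1 : 4 * (α ^ 2 + β ^ 2) = 4 * v ^ 2 := by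
      linear_combination (-(a^2 + b^2 + 2*α)) * hα2 - (a^2 - b^2 + 2*β) * hβ2 + 2 * h1
    have e2 : α ^ 2 + β ^ 2 = v ^ 2 := by linarith
    have e3 : 4 * (α ^ 2 - β ^ 2) = 4 * (a ^ 2 * b ^ 2) := by
      linear_combination (-(a^2 + b^2 + 2*α)) * hα2 + (a^2 - b^2 + 2*β) * hβ2
    have e4 : α ^ 2 - β ^ 2 = a ^ 2 * b ^ 2 := by linarith
    linear_combination (α^2 + β^2) * e4 + (a^2 * b^2) * e2
  have ha0 : a ≠ 0 := by rintro rfl; exact absurd (Int.odd_iff.mp ha) (by norm_num)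
  have hb0 : b ≠ 0 := by rintro rfl; exact absurd (Int.odd_iff.mp hb) (by norm_num)
  rcases quartic hquart with h0 | h0
  · -- β = 0, so a² = b², so a, b = ±1
    rw [h0] at hβ2
    have hsq : (a - b) * (a + b) = 0 := by linear_combination hβ2
    have hdvd : a ∣ b := by
      rcases mul_eq_zero.mp hsq with h' | h'
      · exact ⟨1, by linarith⟩
      · exact ⟨-1, by linarith⟩
    have hunit : IsUnit a := hcop.isUnit_of_dvd' dvd_rfl hdvd
    have ha4 : a ^ 4 = 1 := by
      rcases Int.isUnit_iff.mp hunit with h' | h' <;> rw [h'] <;> norm_num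
    have hb4 : b ^ 4 = 1 := by
      have : b ^ 4 = a ^ 4 := by nlinarith [hβ2]
      rw [this, ha4]
    have hw3 : w ^ 2 = 3 := by rw [h2, ha4, hb4]; norm_num
    rcases Int.even_or_odd w with ⟨k, hk⟩ | ⟨k, hk⟩
    · have h4 : 4 * (k * k) = 3 := by rw [hk] at hw3; linear_combination hw3
      have := sq_nonneg k
      omega
    · have h4 : 4 * (k * k + k) = 2 := by rw [hk] at hw3; linear_combination hw3
      omega
  · rcases mul_eq_zero.mp h0 with h0 | h0
    · rcases mul_eq_zero.mp h0 with h0 | h0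
      · exact ha0 h0
      · exact hb0 h0
    · rw [h0] at h1
      have ha4 : (0:ℤ) < a ^ 4 := by positivity
      have hb4 : (0:ℤ) < b ^ 4 := by positivity
      linarith

/-- if r² = 2^f * N with N odd then N is a perfect square -/
lemma pow2_square : ∀ (f : ℕ) (r N : ℤ), Odd N → r ^ 2 = 2 ^ f * N → ∃ ρ, N = ρ ^ 2 := by
  intro f
  induction f using Nat.strong_induction_on with
  | _ f IH =>
    intro r N hN h
    match f, IH with
    | 0, _ => exact ⟨r, by rw [pow_zero, one_mul] at h; exact h.symm⟩
    | 1, _ =>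
      exfalso
      obtain ⟨r1, rfl⟩ : Even r := by
        apply even_of_sq_even
        rw [h, pow_one]
        exact ⟨N, by ring⟩
      rw [pow_one] at h
      have hN2 : 2 * (2 * r1 ^ 2) = 2 * N := by linear_combination h
      exact (Int.not_even_iff_odd.mpr hN) ⟨r1 ^ 2, by linarith⟩
    | (f + 2), IH =>
      obtain ⟨r1, rfl⟩ : Even r := by
        apply even_of_sq_even
        rw [h]
        exact ⟨2 ^ (f + 1) * N, by ring⟩
      have h' : r1 ^ 2 = 2 ^ f * N := by
        have h4 : (4:ℤ) * r1 ^ 2 = 4 * (2 ^ f * N) := by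
          rw [show ((2:ℤ))^(f+2) = 4 * 2^f by ring] at h
          linear_combination h
        linarith
      exact IH f (by omega) r1 N hN h'

lemma pos_unit_sq {a m ρ : ℤ} (h : IsCoprime a m) (heq : a * m = ρ ^ 2)
    (ha : 0 < a) : ∃ x : ℤ, a = x ^ 2 := pos_sq_of_coprime h heq ha

/-- four pairwise coprime positive factors of a square are squares -/
lemma four_sq {a b c d ρ : ℤ} (hab : IsCoprime a b) (hac : IsCoprime a c)
    (had : IsCoprime a d) (hbc : IsCoprime b c) (hbd : IsCoprime b d)
    (hcd : IsCoprime c d) (ha : 0 < a) (hb : 0 < b) (hc : 0 < c) (hd : 0 < d)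
    (h : a * b * c * d = ρ ^ 2) :
    (∃ x, a = x ^ 2) ∧ (∃ x, b = x ^ 2) ∧ (∃ x, c = x ^ 2) ∧ (∃ x, d = x ^ 2) := by
  refine ⟨?_, ?_, ?_, ?_⟩
  · exact pos_sq_of_coprime (hab.mul_right (hac.mul_right had))
      (show a * (b * (c * d)) = ρ ^ 2 by linear_combination h) ha
  · exact pos_sq_of_coprime (hab.symm.mul_right (hbc.mul_right hbd))
      (show b * (a * (c * d)) = ρ ^ 2 by linear_combination h) hb
  · exact pos_sq_of_coprime (hac.symm.mul_right (hbc.symm.mul_right hcd))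
      (show c * (a * (b * d)) = ρ ^ 2 by linear_combination h) hc
  · exact pos_sq_of_coprime (had.symm.mul_right (hbd.symm.mul_right hcd.symm))
      (show d * (a * (b * c)) = ρ ^ 2 by linear_combination h) hd

/-- generic core case: r² = 2^T·a·b·(a²+2^d b²)·(a²+2^(d+1) b²) with a,b odd positive coprime,
d ≥ 1 is impossible -/
lemma core1 {a b r : ℤ} (T d : ℕ) (hd : 1 ≤ d) (haodd : Odd a) (hbodd : Odd b)
    (ha : 0 < a) (hb : 0 < b) (hcop : IsCoprime a b)
    (h : r ^ 2 = 2 ^ T * (a * b * (a ^ 2 + 2 ^ d * b ^ 2) * (a ^ 2 + 2 ^ (d + 1) * b ^ 2))) :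
    False := by
  obtain ⟨d', rfl⟩ : ∃ d', d = d' + 1 := ⟨d - 1, by omega⟩
  have hq1odd : Odd (a ^ 2 + 2 ^ (d' + 1) * b ^ 2) := by
    apply Odd.add_even haodd.pow
    exact ⟨2 ^ d' * b ^ 2, by ring⟩
  have hq2odd : Odd (a ^ 2 + 2 ^ (d' + 1 + 1) * b ^ 2) := by
    apply Odd.add_even haodd.pow
    exact ⟨2 ^ (d' + 1) * b ^ 2, by ring⟩
  have hNodd : Odd (a * b * (a ^ 2 + 2 ^ (d' + 1) * b ^ 2) * (a ^ 2 + 2 ^ (d' + 1 + 1) * b ^ 2)) :=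
    ((haodd.mul hbodd).mul hq1odd).mul hq2odd
  obtain ⟨ρ, hρ⟩ := pow2_square T r _ hNodd h
  -- coprimality of the four factors
  have ha2 : IsCoprime a (2:ℤ) := odd_isCoprime_two haodd
  have hb2 : IsCoprime b (2:ℤ) := odd_isCoprime_two hbodd
  have haq1 : IsCoprime a (a ^ 2 + 2 ^ (d' + 1) * b ^ 2) := by
    have h1 : IsCoprime a (2 ^ (d' + 1) * b ^ 2) := (ha2.pow_right).mul_right hcop.pow_right
    have h2 : IsCoprime a (2 ^ (d' + 1) * b ^ 2 + a * a) := IsCoprime.add_mul_left_right_iff.mpr h1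
    have e : a ^ 2 + 2 ^ (d' + 1) * b ^ 2 = 2 ^ (d' + 1) * b ^ 2 + a * a := by ring
    rwa [e]
  have haq2 : IsCoprime a (a ^ 2 + 2 ^ (d' + 1 + 1) * b ^ 2) := by
    have h1 : IsCoprime a (2 ^ (d' + 1 + 1) * b ^ 2) := (ha2.pow_right).mul_right hcop.pow_right
    have h2 : IsCoprime a (2 ^ (d' + 1 + 1) * b ^ 2 + a * a) := IsCoprime.add_mul_left_right_iff.mpr h1
    have e : a ^ 2 + 2 ^ (d' + 1 + 1) * b ^ 2 = 2 ^ (d' + 1 + 1) * b ^ 2 + a * a := by ring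
    rwa [e]
  have hbq1 : IsCoprime b (a ^ 2 + 2 ^ (d' + 1) * b ^ 2) := by
    have h1 : IsCoprime b (a ^ 2) := hcop.symm.pow_right
    have h2 : IsCoprime b (a ^ 2 + b * (2 ^ (d' + 1) * b)) := IsCoprime.add_mul_left_right_iff.mpr h1
    have e : a ^ 2 + 2 ^ (d' + 1) * b ^ 2 = a ^ 2 + b * (2 ^ (d' + 1) * b) := by ring
    rwa [e]
  have hbq2 : IsCoprime b (a ^ 2 + 2 ^ (d' + 1 + 1) * b ^ 2) := by
    have h1 : IsCoprime b (a ^ 2) := hcop.symm.pow_right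
    have h2 : IsCoprime b (a ^ 2 + b * (2 ^ (d' + 1 + 1) * b)) := IsCoprime.add_mul_left_right_iff.mpr h1
    have e : a ^ 2 + 2 ^ (d' + 1 + 1) * b ^ 2 = a ^ 2 + b * (2 ^ (d' + 1 + 1) * b) := by ring
    rwa [e]
  have hq1q2 : IsCoprime (a ^ 2 + 2 ^ (d' + 1) * b ^ 2) (a ^ 2 + 2 ^ (d' + 1 + 1) * b ^ 2) := by
    have h1 : IsCoprime (a ^ 2 + 2 ^ (d' + 1) * b ^ 2) (2 ^ (d' + 1) * b ^ 2) :=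
      ((odd_isCoprime_two hq1odd).pow_right).mul_right hbq1.symm.pow_right
    have h2 : IsCoprime (a ^ 2 + 2 ^ (d' + 1) * b ^ 2) (2 ^ (d' + 1) * b ^ 2 + (a ^ 2 + 2 ^ (d' + 1) * b ^ 2) * 1) := IsCoprime.add_mul_left_right_iff.mpr h1
    have e : a ^ 2 + 2 ^ (d' + 1 + 1) * b ^ 2 =
        2 ^ (d' + 1) * b ^ 2 + (a ^ 2 + 2 ^ (d' + 1) * b ^ 2) * 1 := by ring
    rwa [← e] at h2
  have hq1pos : (0:ℤ) < a ^ 2 + 2 ^ (d' + 1) * b ^ 2 := by positivity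
  have hq2pos : (0:ℤ) < a ^ 2 + 2 ^ (d' + 1 + 1) * b ^ 2 := by positivity
  obtain ⟨⟨u, hu⟩, ⟨σ, hσ⟩, ⟨v, hv⟩, ⟨w, hw⟩⟩ :=
    four_sq hcop haq1 haq2 hbq1 hbq2 hq1q2 ha hb hq1pos hq2pos hρ
  have hσ0 : σ ≠ 0 := by rintro rfl; rw [hσ] at hb; simp at hb
  apply hσ0
  have h1 : v ^ 2 = u ^ 4 + 2 ^ (d' + 1) * σ ^ 4 := by
    rw [← hv, hu, hσ]; ring
  have h2 : w ^ 2 = u ^ 4 + 2 ^ (d' + 1 + 1) * σ ^ 4 := by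
    rw [← hw, hu, hσ]; ring
  exact keyodd (d' + 1) h1 h2

/-- boundary core case : r² = 2^T·a·b·(a²+b²)·(a²+2b²) with a,b odd positive coprime
is impossible -/
lemma core0 {a b r : ℤ} (T : ℕ) (haodd : Odd a) (hbodd : Odd b)
    (ha : 0 < a) (hb : 0 < b) (hcop : IsCoprime a b)
    (h : r ^ 2 = 2 ^ T * (a * b * (a ^ 2 + b ^ 2) * (a ^ 2 + 2 * b ^ 2))) : False := by
  obtain ⟨k1, hk1⟩ := odd_sq_mod8 haodd
  obtain ⟨k2, hk2⟩ := odd_sq_mod8 hbodd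
  obtain ⟨G, hG, hGodd⟩ : ∃ G, a ^ 2 + b ^ 2 = 2 * G ∧ Odd G := by
    refine ⟨4 * (k1 + k2) + 1, by rw [hk1, hk2]; ring, ⟨2 * (k1 + k2), by ring⟩⟩
  have hqodd : Odd (a ^ 2 + 2 * b ^ 2) := by
    apply Odd.add_even haodd.pow
    exact ⟨b ^ 2, by ring⟩
  have hNodd : Odd (a * b * G * (a ^ 2 + 2 * b ^ 2)) :=
    ((haodd.mul hbodd).mul hGodd).mul hqodd
  have h' : r ^ 2 = 2 ^ (T + 1) * (a * b * G * (a ^ 2 + 2 * b ^ 2)) := by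
    rw [h, hG]; ring
  obtain ⟨ρ, hρ⟩ := pow2_square (T + 1) r _ hNodd h'
  have ha2 : IsCoprime a (2:ℤ) := odd_isCoprime_two haodd
  have hb2 : IsCoprime b (2:ℤ) := odd_isCoprime_two hbodd
  have haG : IsCoprime a G := by
    have h1 : IsCoprime a (b ^ 2 + a * a) := IsCoprime.add_mul_left_right_iff.mpr hcop.pow_right
    have e : b ^ 2 + a * a = 2 * G := by linear_combination hG
    rw [e] at h1
    exact h1.of_isCoprime_of_dvd_right (dvd_mul_left G 2)
  have hbG : IsCoprime b G := by
    have h1 : IsCoprime b (a ^ 2 + b * b) :=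
      IsCoprime.add_mul_left_right_iff.mpr hcop.symm.pow_right
    have e : a ^ 2 + b * b = 2 * G := by linear_combination hG
    rw [e] at h1
    exact h1.of_isCoprime_of_dvd_right (dvd_mul_left G 2)
  have haq : IsCoprime a (a ^ 2 + 2 * b ^ 2) := by
    have h1 : IsCoprime a (2 * b ^ 2) := ha2.mul_right hcop.pow_right
    have h2 : IsCoprime a (2 * b ^ 2 + a * a) := IsCoprime.add_mul_left_right_iff.mpr h1
    have e : a ^ 2 + 2 * b ^ 2 = 2 * b ^ 2 + a * a := by ring
    rwa [e]
  have hbq : IsCoprime b (a ^ 2 + 2 * b ^ 2) := by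
    have h1 : IsCoprime b (a ^ 2) := hcop.symm.pow_right
    have h2 : IsCoprime b (a ^ 2 + b * (2 * b)) := IsCoprime.add_mul_left_right_iff.mpr h1
    have e : a ^ 2 + 2 * b ^ 2 = a ^ 2 + b * (2 * b) := by ring
    rwa [e]
  have hGq : IsCoprime G (a ^ 2 + 2 * b ^ 2) := by
    have h1 : IsCoprime G (b ^ 2) := hbG.symm.pow_right
    have h2 : IsCoprime G (b ^ 2 + G * 2) := IsCoprime.add_mul_left_right_iff.mpr h1
    have e : a ^ 2 + 2 * b ^ 2 = b ^ 2 + G * 2 := by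
      linear_combination hG
    rwa [e]
  have hGpos : (0:ℤ) < G := by nlinarith [sq_nonneg a, sq_nonneg b]
  have hqpos : (0:ℤ) < a ^ 2 + 2 * b ^ 2 := by positivity
  obtain ⟨⟨u, hu⟩, ⟨σ, hσ⟩, ⟨v, hv⟩, ⟨w, hw⟩⟩ :=
    four_sq hcop haG haq hbG hbq hGq ha hb hGpos hqpos hρ
  have huodd : Odd u := odd_of_sq_odd (hu ▸ haodd)
  have hσodd : Odd σ := odd_of_sq_odd (hσ ▸ hbodd)
  have hcopuσ : IsCoprime u σ := by
    have h1 := hcop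
    rw [hu, hσ] at h1
    exact (h1.of_isCoprime_of_dvd_left (dvd_pow_self u two_ne_zero)).of_isCoprime_of_dvd_right
      (dvd_pow_self σ two_ne_zero)
  apply key2 huodd hσodd hcopuσ (v := v) (w := w)
  · linear_combination hG - (a + u ^ 2) * hu - (b + σ ^ 2) * hσ + 2 * hv
  · linear_combination -hw + (a + u ^ 2) * hu + 2 * (b + σ ^ 2) * hσ

/-- main integer claim : p·s·(p²+2^m s²)·(p²+2^(m+1) s²) is never a nonzero square -/
lemma intClaim : ∀ (n : ℕ) (m : ℕ) (p s r : ℤ), p.natAbs + s.natAbs ≤ n →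
    r ^ 2 = p * s * (p ^ 2 + 2 ^ m * s ^ 2) * (p ^ 2 + 2 ^ (m + 1) * s ^ 2) → r = 0 := by
  intro n
  induction n using Nat.strong_induction_on with
  | _ n IH =>
    intro m p s r hn h
    by_cases hp : p = 0
    · subst hp
      have : r ^ 2 = 0 := by rw [h]; ring
      exact pow_eq_zero_iff two_ne_zero |>.mp this
    by_cases hs : s = 0
    · subst hs
      have : r ^ 2 = 0 := by rw [h]; ring
      exact pow_eq_zero_iff two_ne_zero |>.mp this
    -- gcd reduction
    by_cases hg1 : Int.gcd p s = 1
    case neg =>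
      set g := Int.gcd p s with hgdef
      have hg0 : g ≠ 0 := by
        simp only [hgdef, Ne, Int.gcd_eq_zero_iff]
        rintro ⟨hh, -⟩; exact hp hh
      have hg2 : 2 ≤ g := by omega
      obtain ⟨p', hp'⟩ : ((g : ℤ)) ∣ p := Int.gcd_dvd_left _ _
      obtain ⟨s', hs'⟩ : ((g : ℤ)) ∣ s := Int.gcd_dvd_right _ _
      have hgz : (0:ℤ) < (g:ℤ) := by exact_mod_cast Nat.pos_of_ne_zero hg0
      have hrd : (g:ℤ) ^ 3 ∣ r := by
        have hdd : ((g:ℤ) ^ 3) ^ 2 ∣ r ^ 2 := by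
          refine ⟨p' * s' * (p' ^ 2 + 2 ^ m * s' ^ 2) * (p' ^ 2 + 2 ^ (m + 1) * s' ^ 2), ?_⟩
          rw [hp', hs'] at h
          linear_combination h
        exact (Int.pow_dvd_pow_iff two_ne_zero).mp hdd
      obtain ⟨r', hr'⟩ := hrd
      have heq' : r' ^ 2 = p' * s' * (p' ^ 2 + 2 ^ m * s' ^ 2) * (p' ^ 2 + 2 ^ (m + 1) * s' ^ 2) := by
        have h6 : ((g:ℤ) ^ 6) * r' ^ 2 =
            ((g:ℤ) ^ 6) * (p' * s' * (p' ^ 2 + 2 ^ m * s' ^ 2) * (p' ^ 2 + 2 ^ (m + 1) * s' ^ 2)) := by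
          rw [hp', hs', hr'] at h
          linear_combination h
        exact mul_left_cancel₀ (by positivity) h6
      have hp'0 : p' ≠ 0 := by rintro rfl; rw [hp', mul_zero] at hp; exact hp rfl
      have hs'0 : s' ≠ 0 := by rintro rfl; rw [hs', mul_zero] at hs; exact hs rfl
      have hlt : p'.natAbs + s'.natAbs < n := by
        have e1 : p.natAbs = g * p'.natAbs := by rw [hp', Int.natAbs_mul, Int.natAbs_natCast]
        have e2 : s.natAbs = g * s'.natAbs := by rw [hs', Int.natAbs_mul, Int.natAbs_natCast]
        have c1 : 1 ≤ p'.natAbs := Nat.pos_of_ne_zero (Int.natAbs_ne_zero.mpr hp'0)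
        have c2 : 1 ≤ s'.natAbs := Nat.pos_of_ne_zero (Int.natAbs_ne_zero.mpr hs'0)
        have d1 : 2 * p'.natAbs ≤ g * p'.natAbs := Nat.mul_le_mul_right _ hg2
        have d2 : 2 * s'.natAbs ≤ g * s'.natAbs := Nat.mul_le_mul_right _ hg2
        omega
      have := IH (p'.natAbs + s'.natAbs) hlt m p' s' r' le_rfl heq'
      rw [this, mul_zero] at hr'
      exact hr'
    case pos =>
    exfalso
    have hcop : IsCoprime p s := Int.isCoprime_iff_gcd_eq_one.mpr hg1
    -- positivity
    have hp2 : (0:ℤ) < p ^ 2 :=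
      lt_of_le_of_ne (sq_nonneg p) fun h' => hp (pow_eq_zero_iff two_ne_zero |>.mp h'.symm)
    have hs2 : (0:ℤ) < s ^ 2 :=
      lt_of_le_of_ne (sq_nonneg s) fun h' => hs (pow_eq_zero_iff two_ne_zero |>.mp h'.symm)
    have hF1 : (0:ℤ) < p ^ 2 + 2 ^ m * s ^ 2 := by positivity
    have hF2 : (0:ℤ) < p ^ 2 + 2 ^ (m + 1) * s ^ 2 := by positivity
    have hps : 0 < p * s := by
      rcases lt_trichotomy (p * s) 0 with hlt | heq0 | hgt
      · exfalso
        have : r ^ 2 < 0 := by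
          rw [show r ^ 2 = p * s * ((p ^ 2 + 2 ^ m * s ^ 2) * (p ^ 2 + 2 ^ (m + 1) * s ^ 2))
            from by rw [h]; ring]
          exact mul_neg_of_neg_of_pos hlt (mul_pos hF1 hF2)
        linarith [sq_nonneg r]
      · exact absurd (mul_eq_zero.mp heq0) (by rintro (h'|h') <;> [exact hp h'; exact hs h'])
      · exact hgt
    -- pass to absolute values
    set P := (p.natAbs : ℤ) with hPdef
    set S := (s.natAbs : ℤ) with hSdef
    have hPsq : P ^ 2 = p ^ 2 := Int.natAbs_sq p
    have hSsq : S ^ 2 = s ^ 2 := Int.natAbs_sq s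
    have hPS : P * S = p * s := by
      rw [hPdef, hSdef, ← Nat.cast_mul, ← Int.natAbs_mul, Int.natCast_natAbs, abs_of_pos hps]
    have h' : r ^ 2 = P * S * (P ^ 2 + 2 ^ m * S ^ 2) * (P ^ 2 + 2 ^ (m + 1) * S ^ 2) := by
      rw [hPS, hPsq, hSsq]; exact h
    have hP0 : 0 < P := by
      rw [hPdef]; exact_mod_cast Nat.pos_of_ne_zero (Int.natAbs_ne_zero.mpr hp)
    have hS0 : 0 < S := by
      rw [hSdef]; exact_mod_cast Nat.pos_of_ne_zero (Int.natAbs_ne_zero.mpr hs)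
    have hcop' : IsCoprime P S := by
      rw [Int.isCoprime_iff_gcd_eq_one]
      rw [Int.isCoprime_iff_gcd_eq_one] at hcop
      simpa [Int.gcd, hPdef, hSdef, Int.natAbs_abs] using hcop
    clear h hPS hPsq hSsq hps hF1 hF2 hp2 hs2 hcop hg1
    -- parity split
    rcases Int.even_or_odd P with hPe | hPo
    · -- P even, so S odd
      have hSodd : Odd S := by
        rcases Int.even_or_odd S with hSe | hSo
        · exfalso
          have := IsCoprime.isUnit_of_dvd' hcop' hPe.two_dvd hSe.two_dvd
          rw [Int.isUnit_iff] at this; omega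
        · exact hSo
      obtain ⟨e, P0n, hP0odd, hPfac⟩ := Nat.exists_eq_two_pow_mul_odd
        (Int.natAbs_ne_zero.mpr hp)
      set P0 : ℤ := (P0n : ℤ) with hP0def
      have hP0oddZ : Odd P0 := by rw [hP0def]; exact_mod_cast hP0odd
      have hPfacZ : P = 2 ^ e * P0 := by
        rw [hPdef, hP0def, hPfac]; push_cast; ring
      have hP0pos : 0 < P0 := by
        rcases Nat.eq_zero_or_pos P0n with h0 | h0
        · exfalso; rw [h0] at hP0odd; exact (Nat.not_odd_iff_even.mpr Even.zero) hP0odd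
        · rw [hP0def]; exact_mod_cast h0
      have he1 : 1 ≤ e := by
        by_contra he0
        have : e = 0 := by omega
        rw [this, pow_zero, one_mul] at hPfacZ
        rw [hPfacZ] at hPe
        exact (Int.not_even_iff_odd.mpr hP0oddZ) hPe
      have hcop0 : IsCoprime P0 S :=
        hcop'.of_isCoprime_of_dvd_left ⟨2 ^ e, by rw [hPfacZ]; ring⟩
      rw [hPfacZ] at h'
      rw [mul_pow, ← pow_mul] at h'
      -- case on m vs 2e
      rcases Nat.lt_or_ge m (2 * e) with hcase | hcase
      · rcases Nat.eq_or_lt_of_le (Nat.succ_le_of_lt hcase) with hmeq | hmlt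
        · -- m + 1 = 2e : boundary core0
          rw [show e * 2 = m + 1 from by omega] at h'
          apply core0 (a := S) (b := P0) (r := r) (e + m + (m + 1))
            hSodd hP0oddZ hS0 hP0pos hcop0.symm
          rw [h']; ring
        · -- m + 2 ≤ 2e : core1 with d = 2e - m - 1
          have hd1 : 1 ≤ 2 * e - m - 1 := by omega
          rw [show e * 2 = m + (2 * e - m - 1 + 1) from by omega] at h'
          rw [pow_add] at h'
          apply core1 (a := S) (b := P0) (r := r) (e + m + (m + 1)) (2 * e - m - 1)
            hd1 hSodd hP0oddZ hS0 hP0pos hcop0.symm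
          rw [h']; ring
      · rcases Nat.eq_or_lt_of_le hcase with hmeq | hmlt
        · -- m = 2e : boundary core0
          rw [show e * 2 = m from by omega] at h'
          apply core0 (a := P0) (b := S) (r := r) (e + m + m)
            hP0oddZ hSodd hP0pos hS0 hcop0
          rw [h']; ring
        · -- m ≥ 2e + 1 : core1 with d = m - 2e
          have hd1 : 1 ≤ m - 2 * e := by omega
          rw [show m = e * 2 + (m - 2 * e) from by omega] at h'
          apply core1 (a := P0) (b := S) (r := r) (e + e * 2 + e * 2) (m - 2 * e)
            hd1 hP0oddZ hSodd hP0pos hS0 hcop0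
          rw [h']; ring
    · -- P odd
      obtain ⟨f, S0n, hS0odd, hSfac⟩ := Nat.exists_eq_two_pow_mul_odd
        (Int.natAbs_ne_zero.mpr hs)
      set S0 : ℤ := (S0n : ℤ) with hS0def
      have hS0oddZ : Odd S0 := by rw [hS0def]; exact_mod_cast hS0odd
      have hSfacZ : S = 2 ^ f * S0 := by
        rw [hSdef, hS0def, hSfac]; push_cast; ring
      have hS0pos : 0 < S0 := by
        rcases Nat.eq_zero_or_pos S0n with h0 | h0
        · exfalso; rw [h0] at hS0odd; exact (Nat.not_odd_iff_even.mpr Even.zero) hS0odd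
        · rw [hS0def]; exact_mod_cast h0
      have hcop0 : IsCoprime P S0 :=
        hcop'.of_isCoprime_of_dvd_right ⟨2 ^ f, by rw [hSfacZ]; ring⟩
      rw [hSfacZ] at h'
      rcases Nat.eq_zero_or_pos (m + 2 * f) with hM0 | hM1
      · -- m = 0, f = 0 : boundary core0
        have hm0 : m = 0 := by omega
        have hf0 : f = 0 := by omega
        apply core0 (a := P) (b := S0) (r := r) 0 hPo hS0oddZ hP0 hS0pos hcop0
        rw [h', hm0, hf0]; ring
      · -- core1 with d = m + 2f
        apply core1 (a := P) (b := S0) (r := r) f (m + 2 * f) hM1 hPo hS0oddZ hP0 hS0pos hcop0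
        rw [h']; ring

/-- rational version of the claim -/
lemma ratClaim (m : ℕ) (p s r : ℚ)
    (h : r ^ 2 = p * s * (p ^ 2 + 2 ^ m * s ^ 2) * (p ^ 2 + 2 ^ (m + 1) * s ^ 2)) :
    r = 0 := by
  set P : ℤ := p.num * s.den with hPdef
  set S : ℤ := s.num * p.den with hSdef
  set D : ℚ := (p.den : ℚ) * (s.den : ℚ) with hDdef
  have hD0 : D ≠ 0 := by
    rw [hDdef]
    positivity
  have hpnum : (p.num : ℚ) = p * p.den := (Rat.mul_den_eq_num p).symm
  have hsnum : (s.num : ℚ) = s * s.den := (Rat.mul_den_eq_num s).symm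
  have hPQ : (P : ℚ) = p * D := by
    rw [hPdef, hDdef]; push_cast; rw [hpnum]; ring
  have hSQ : (S : ℚ) = s * D := by
    rw [hSdef, hDdef]; push_cast; rw [hsnum]; ring
  set R : ℚ := r * D ^ 3 with hRdef
  set N : ℤ := P * S * (P ^ 2 + 2 ^ m * S ^ 2) * (P ^ 2 + 2 ^ (m + 1) * S ^ 2) with hNdef
  have hR2 : R ^ 2 = (N : ℚ) := by
    rw [hRdef, hNdef]
    push_cast
    rw [hPQ, hSQ]
    linear_combination (D ^ 6) * h
  have hRden : R.den = 1 := by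
    have h1 : (R * R).den = 1 := by
      rw [show R * R = ((N : ℚ)) from by rw [← hR2]; ring]
      exact Rat.den_intCast N
    rw [Rat.mul_self_den] at h1
    exact Nat.eq_one_of_mul_eq_one_right h1
  have hRnum : (R.num : ℚ) = R := Rat.coe_int_num_of_den_eq_one hRden
  have hNum2 : R.num ^ 2 = N := by
    have : ((R.num ^ 2 : ℤ) : ℚ) = ((N : ℤ) : ℚ) := by
      push_cast
      rw [hRnum]
      exact hR2
    exact_mod_cast this
  have := intClaim (P.natAbs + S.natAbs) m P S R.num le_rfl (by rw [hNum2, hNdef])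
  have hR0 : R = 0 := by rw [← hRnum, this]; norm_num
  rw [hRdef] at hR0
  rcases mul_eq_zero.mp hR0 with h0 | h0
  · exact h0
  · exact absurd h0 (by positivity)

/-- The only `ℚ(t)`-points of `y² = x(x² + 2ⁱtʲ)(x² + 2^{i+1}tʲ)` are `(0,0)` and `∞`:
if `X, Y, Z ∈ ℚ[t]` have no common non-unit factor and satisfy the weighted homogeneous
equation `Y² = XZ(X² + 2ⁱtʲZ²)(X² + 2^{i+1}tʲZ²)`, then `Y = 0` and
`XZ(X² + 2ⁱtʲZ²)(X² + 2^{i+1}tʲZ²) = 0`. -/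
theorem function_field_points (i j : ℕ) (A B C : Polynomial ℚ)
    (hcop : ∀ d : Polynomial ℚ, d ∣ A → d ∣ B → d ∣ C → IsUnit d)
    (heq : B ^ 2 =
      A * C * (A ^ 2 + Polynomial.C ((2 : ℚ) ^ i) * X ^ j * C ^ 2) *
        (A ^ 2 + Polynomial.C ((2 : ℚ) ^ (i + 1)) * X ^ j * C ^ 2)) :
    B = 0 ∧
      A * C * (A ^ 2 + Polynomial.C ((2 : ℚ) ^ i) * X ^ j * C ^ 2) *
        (A ^ 2 + Polynomial.C ((2 : ℚ) ^ (i + 1)) * X ^ j * C ^ 2) = 0 := by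
  have hB : B = 0 := by
    apply Polynomial.eq_zero_of_infinite_isRoot
    have hsm : StrictMono (fun k : ℕ => (2 : ℚ) ^ k) :=
      fun _ _ h => pow_lt_pow_right₀ one_lt_two h
    apply Set.infinite_of_injective_forall_mem (f := fun k : ℕ => (2 : ℚ) ^ k) hsm.injective
    intro k
    have heval := congrArg (Polynomial.eval ((2 : ℚ) ^ k)) heq
    simp only [Polynomial.eval_mul, Polynomial.eval_add, Polynomial.eval_pow,
      Polynomial.eval_C, Polynomial.eval_X] at heval
    show Polynomial.IsRoot B ((2:ℚ) ^ k)
    unfold Polynomial.IsRoot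
    apply ratClaim (i + k * j) (Polynomial.eval ((2:ℚ)^k) A) (Polynomial.eval ((2:ℚ)^k) C)
    linear_combination heval
  refine ⟨hB, ?_⟩
  rw [hB] at heq
  simpa using heq.symm
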